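/- Let 0 < α < 2 and fix a real number p > α. Then the truncated p-th moment, 2∫_{1/2}^1 min(m̄_α(x), n)^p dx = 2 ∑_{k=1}^{n-1} k^p Δ_k(α) + 2 n^p ∑_{k=n}^∞ Δ_k(α), is asymptotic to (2p/(p−α)) n^(p−α) as n → ∞. -/

import Mathlib

open Filter Topology

/-- ℓ⁺_m(α) = 1 - (m + 2^(1/α))^(-α) -/
noncomputable def ellp (α : ℝ) (m : ℕ) : ℝ := 1 - ((m : ℝ) + (2 : ℝ) ^ (1/α)) ^ (-α)

/-- Δ_k(α) = ℓ⁺_k(α) - ℓ⁺_{k-1}(α) -/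
noncomputable def Dlt (α : ℝ) (k : ℕ) : ℝ := ellp α k - ellp α (k - 1)

section aux

variable {α p : ℝ}

/-- f m = (m + c)^(-α) with c = 2^(1/α). -/
noncomputable def ff (α : ℝ) (m : ℕ) : ℝ := ((m : ℝ) + (2 : ℝ) ^ (1/α)) ^ (-α)

lemma hc_pos (α : ℝ) : (0:ℝ) < (2 : ℝ) ^ (1/α) := Real.rpow_pos_of_pos two_pos _

lemma ff_pos (α : ℝ) (m : ℕ) : 0 < ff α m :=
  Real.rpow_pos_of_pos (by positivity) _

lemma ff_anti (hα : 0 < α) {m m' : ℕ} (h : m ≤ m') : ff α m' ≤ ff α m := by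
  apply Real.rpow_le_rpow_of_nonpos
  · have := hc_pos α; positivity
  · have : (m:ℝ) ≤ (m':ℝ) := Nat.cast_le.2 h
    linarith
  · linarith

lemma ff_tendsto (hα : 0 < α) : Tendsto (ff α) atTop (𝓝 0) := by
  have h1 : Tendsto (fun m : ℕ => (m : ℝ) + (2:ℝ) ^ (1/α)) atTop atTop :=
    tendsto_natCast_atTop_atTop.atTop_add tendsto_const_nhds
  exact (tendsto_rpow_neg_atTop hα).comp h1

lemma Dlt_succ (α : ℝ) (m : ℕ) : Dlt α (m + 1) = ff α m - ff α (m + 1) := by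
  simp only [Dlt, ellp, ff, Nat.add_sub_cancel]
  ring

/-- tail sum -/
lemma tail_sum (hα : 0 < α) (m : ℕ) : ∑' k : ℕ, Dlt α (m + 1 + k) = ff α m := by
  have key : ∀ k : ℕ, Dlt α (m + 1 + k) = ff α (m + k) - ff α (m + k + 1) := by
    intro k
    have : m + 1 + k = (m + k) + 1 := by omega
    rw [this, Dlt_succ]
  have hnn : ∀ k : ℕ, 0 ≤ Dlt α (m + 1 + k) := by
    intro k
    rw [key k]
    have := ff_anti (α := α) hα (Nat.le_succ (m + k))
    linarith
  have hpart : ∀ n : ℕ, ∑ k ∈ Finset.range n, Dlt α (m + 1 + k) = ff α m - ff α (m + n) := by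
    intro n
    calc ∑ k ∈ Finset.range n, Dlt α (m + 1 + k)
        = ∑ k ∈ Finset.range n, (ff α (m + k) - ff α (m + (k+1))) := by
          refine Finset.sum_congr rfl fun k _ => ?_
          rw [key k]; ring_nf
      _ = ff α m - ff α (m + n) := by
          have := Finset.sum_range_sub' (fun k => ff α (m + k)) n
          simpa using this
  have hlim : Tendsto (fun n : ℕ => ∑ k ∈ Finset.range n, Dlt α (m + 1 + k)) atTop
      (𝓝 (ff α m)) := by
    simp only [hpart]
    have : Tendsto (fun n : ℕ => ff α (m + n)) atTop (𝓝 0) := by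
      have := (ff_tendsto hα).comp (tendsto_add_atTop_nat m)
      simpa [Function.comp_def, add_comm] using this
    simpa using tendsto_const_nhds.sub this
  exact ((hasSum_iff_tendsto_nat_of_nonneg hnn _).2 hlim).tsum_eq

/-- Abel summation identity -/
lemma abel_id (hp : 0 < p) (m : ℕ) :
    ∑ k ∈ Finset.Icc 1 m, (k : ℝ) ^ p * Dlt α k + ((m:ℝ) + 1) ^ p * ff α m
      = ∑ k ∈ Finset.range (m + 1), (((k:ℝ) + 1) ^ p - (k:ℝ) ^ p) * ff α k := by
  induction m with
  | zero =>
      simp [Real.zero_rpow hp.ne', Real.one_rpow]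
  | succ m ih =>
      rw [Finset.sum_Icc_succ_top (Nat.one_le_iff_ne_zero.2 (Nat.succ_ne_zero m)),
        Finset.sum_range_succ, ← ih, Dlt_succ]
      push_cast
      ring

end aux

theorem stmt_13 (α p : ℝ) (hα : 0 < α) (hα2 : α < 2) (hp : α < p) :
    Tendsto
      (fun n : ℕ =>
        (2 * ∑ k ∈ Finset.Icc 1 (n - 1), (k : ℝ) ^ p * Dlt α k
          + 2 * (n : ℝ) ^ p * ∑' k : ℕ, Dlt α (n + k)) /
          ((2 * p / (p - α)) * (n : ℝ) ^ (p - α)))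
      atTop (𝓝 1) := by
  have hp0 : 0 < p := hα.trans hp
  have hpa : 0 < p - α := sub_pos.2 hp
  set c : ℝ := (2:ℝ) ^ (1/α) with hc
  -- the sequences u and v
  set u : ℕ → ℝ := fun k => (((k:ℝ) + 1) ^ p - (k:ℝ) ^ p) * ff α k with hu
  set v : ℕ → ℝ := fun k => (p / (p - α)) * (((k:ℝ) + 1) ^ (p - α) - (k:ℝ) ^ (p - α)) with hv
  have hv_pos : ∀ k, 0 < v k := by
    intro k
    apply mul_pos (by positivity)
    have : (k:ℝ) ^ (p - α) < ((k:ℝ) + 1) ^ (p - α) :=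
      Real.rpow_lt_rpow (Nat.cast_nonneg k) (lt_add_one _) hpa
    linarith
  have hsum_v : ∀ n : ℕ, ∑ k ∈ Finset.range n, v k = (p / (p - α)) * (n:ℝ) ^ (p - α) := by
    intro n
    rw [← Finset.mul_sum]
    have : ∑ k ∈ Finset.range n, (((k:ℝ) + 1) ^ (p - α) - (k:ℝ) ^ (p - α))
        = ((n:ℝ)) ^ (p - α) - ((0:ℕ):ℝ) ^ (p - α) := by
      have := Finset.sum_range_sub (fun k : ℕ => ((k:ℝ)) ^ (p - α)) n
      simpa [Nat.cast_succ] using this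
    rw [this]
    simp [Real.zero_rpow hpa.ne']
  -- generic ratio limit: ((k+1)^s - k^s)/(s k^(s-1)) → 1
  have ratio_lim : ∀ s : ℝ, 0 < s →
      Tendsto (fun k : ℕ => (((k:ℝ) + 1) ^ s - (k:ℝ) ^ s) / (s * (k:ℝ) ^ (s - 1)))
        atTop (𝓝 1) := by
    intro s hs
    have hder : HasDerivAt (fun x : ℝ => x ^ s) (s * (1:ℝ) ^ (s - 1)) 1 :=
      Real.hasDerivAt_rpow_const (Or.inl one_ne_zero)
    have hslope : Tendsto (slope (fun x : ℝ => x ^ s) 1) (𝓝[≠] 1) (𝓝 s) := by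
      have := hasDerivAt_iff_tendsto_slope.1 hder
      simpa [Real.one_rpow] using this
    have h1k : Tendsto (fun k : ℕ => 1 + 1/(k:ℝ)) atTop (𝓝[≠] 1) := by
      apply tendsto_nhdsWithin_of_tendsto_nhds_of_eventually_within
      · simpa using tendsto_const_nhds.add (tendsto_one_div_atTop_nhds_zero_nat (𝕜 := ℝ))
      · filter_upwards [eventually_ge_atTop 1] with k hk
        have hk0 : (0:ℝ) < (k:ℝ) := by exact_mod_cast hk
        have : 0 < 1/(k:ℝ) := by positivity
        simp only [Set.mem_compl_iff, Set.mem_singleton_iff]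
        intro h
        nlinarith
    have hcomp : Tendsto (fun k : ℕ => ((1 + 1/(k:ℝ)) ^ s - 1) / (1/(k:ℝ))) atTop (𝓝 s) := by
      have := hslope.comp h1k
      refine this.congr fun k => ?_
      simp [slope_def_field, Real.one_rpow]
    have hdiv : Tendsto (fun k : ℕ => ((1 + 1/(k:ℝ)) ^ s - 1) / (1/(k:ℝ)) / s) atTop
        (𝓝 1) := by
      simpa [div_self hs.ne'] using hcomp.div_const s
    refine hdiv.congr' ?_
    filter_upwards [eventually_ge_atTop 1] with k hk
    have hk0 : (0:ℝ) < (k:ℝ) := by exact_mod_cast hk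
    have h1 : (1 + 1/(k:ℝ)) = ((k:ℝ) + 1)/(k:ℝ) := by field_simp
    have hks : (0:ℝ) < (k:ℝ) ^ s := Real.rpow_pos_of_pos hk0 _
    have e1 : (k:ℝ) ^ (s - 1) = (k:ℝ) ^ s / (k:ℝ) := by
      rw [Real.rpow_sub hk0, Real.rpow_one]
    have hksne : (k:ℝ) ^ s ≠ 0 := hks.ne'
    rw [h1, Real.div_rpow (by positivity) hk0.le, e1, div_div]
    have h2 : (k:ℝ) ^ s * (1/(k:ℝ) * s) = s * ((k:ℝ) ^ s / (k:ℝ)) := by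
      field_simp
    rw [div_sub' hksne, div_div, h2, mul_one]
  -- limits of the three factors
  have hA := ratio_lim p hp0
  have hC := ratio_lim (p - α) hpa
  have hB : Tendsto (fun k : ℕ => ff α k / (k:ℝ) ^ (-α)) atTop (𝓝 1) := by
    have hcont : Tendsto (fun x : ℝ => x ^ (-α)) (𝓝 1) (𝓝 1) := by
      have := (Real.continuousAt_rpow_const 1 (-α) (Or.inl one_ne_zero)).tendsto
      simpa [Real.one_rpow] using this
    have hbase : Tendsto (fun k : ℕ => 1 + c/(k:ℝ)) atTop (𝓝 1) := by
      have h0 : Tendsto (fun k : ℕ => c/(k:ℝ)) atTop (𝓝 0) :=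
        tendsto_const_nhds.div_atTop tendsto_natCast_atTop_atTop
      simpa using tendsto_const_nhds.add h0
    have := hcont.comp hbase
    refine this.congr' ?_
    filter_upwards [eventually_ge_atTop 1] with k hk
    have hk0 : (0:ℝ) < (k:ℝ) := by exact_mod_cast hk
    have hcp : 0 < c := hc ▸ hc_pos α
    have h1 : ((k:ℝ) + c)/(k:ℝ) = 1 + c/(k:ℝ) := by field_simp
    simp only [Function.comp]
    have hffk : ff α k = ((k:ℝ) + c) ^ (-α) := by rw [ff, hc]
    rw [← h1, Real.div_rpow (by linarith) hk0.le, hffk]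
  -- u/v → 1
  have huv : Tendsto (fun k : ℕ => u k / v k) atTop (𝓝 1) := by
    have hABC : Tendsto (fun k : ℕ =>
        ((((k:ℝ) + 1) ^ p - (k:ℝ) ^ p) / (p * (k:ℝ) ^ (p - 1))
          * (ff α k / (k:ℝ) ^ (-α)))
          / ((((k:ℝ) + 1) ^ (p - α) - (k:ℝ) ^ (p - α)) / ((p - α) * (k:ℝ) ^ (p - α - 1))))
        atTop (𝓝 1) := by
      simpa [Pi.div_def] using (hA.mul hB).div hC one_ne_zero
    refine hABC.congr' ?_
    filter_upwards [eventually_ge_atTop 1] with k hk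
    have hk0 : (0:ℝ) < (k:ℝ) := by exact_mod_cast hk
    have hC0 : (0:ℝ) < ((k:ℝ) + 1) ^ (p - α) - (k:ℝ) ^ (p - α) := by
      have : (k:ℝ) ^ (p - α) < ((k:ℝ) + 1) ^ (p - α) :=
        Real.rpow_lt_rpow hk0.le (lt_add_one _) hpa
      linarith
    have e1 : (k:ℝ) ^ (p - 1) * (k:ℝ) ^ (-α) = (k:ℝ) ^ (p - α - 1) := by
      rw [← Real.rpow_add hk0]; congr 1; ring
    have h1 : (k:ℝ) ^ (p - 1) ≠ 0 := (Real.rpow_pos_of_pos hk0 _).ne'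
    have h2 : (k:ℝ) ^ (-α) ≠ 0 := (Real.rpow_pos_of_pos hk0 _).ne'
    have h3 : (k:ℝ) ^ (p - α - 1) ≠ 0 := (Real.rpow_pos_of_pos hk0 _).ne'
    rw [hu, hv]
    rw [← e1]
    field_simp
  -- sums of u over sums of v → 1
  have hvne : ∀ k, v k ≠ 0 := fun k => (hv_pos k).ne'
  have hlittle : (fun k => u k - v k) =o[atTop] v := by
    rw [Asymptotics.isLittleO_iff_tendsto fun k h => absurd h (hvne k)]
    have : Tendsto (fun k => u k / v k - 1) atTop (𝓝 0) := by
      simpa using huv.sub_const 1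
    refine this.congr fun k => ?_
    rw [sub_div, div_self (hvne k)]
  have hT : Tendsto (fun n : ℕ => ∑ k ∈ Finset.range n, v k) atTop atTop := by
    simp only [hsum_v]
    exact ((tendsto_rpow_atTop hpa).comp tendsto_natCast_atTop_atTop).const_mul_atTop
      (by positivity)
  have hsumo : (fun n => ∑ k ∈ Finset.range n, (u k - v k)) =o[atTop]
      (fun n => ∑ k ∈ Finset.range n, v k) :=
    hlittle.sum_range (fun k => (hv_pos k).le) hT
  have hratio : Tendsto (fun n : ℕ =>
      (∑ k ∈ Finset.range n, u k) / (∑ k ∈ Finset.range n, v k)) atTop (𝓝 1) := by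
    have h0 := hsumo.tendsto_div_nhds_zero
    have h1 : Tendsto (fun n : ℕ =>
        ((∑ k ∈ Finset.range n, u k) - ∑ k ∈ Finset.range n, v k)
          / (∑ k ∈ Finset.range n, v k) + 1) atTop (𝓝 1) := by
      have := h0.add_const 1
      simp only [Finset.sum_sub_distrib] at this ⊢
      simpa using this
    refine h1.congr' ?_
    filter_upwards [eventually_ge_atTop 1] with n hn
    have hvs : 0 < ∑ k ∈ Finset.range n, v k :=
      Finset.sum_pos (fun k _ => hv_pos k) (by simp [Finset.nonempty_range_iff]; omega)
    field_simp
    ring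
  -- final assembly
  refine hratio.congr' ?_
  filter_upwards [eventually_ge_atTop 1] with n hn
  obtain ⟨m, rfl⟩ : ∃ m, n = m + 1 := ⟨n - 1, by omega⟩
  have htail := tail_sum (α := α) hα m
  have habel := abel_id (α := α) hp0 m
  have hd : (m + 1 : ℕ) - 1 = m := by omega
  rw [hd, htail]
  have hnum : 2 * ∑ k ∈ Finset.Icc 1 m, (k : ℝ) ^ p * Dlt α k
      + 2 * ((m + 1 : ℕ) : ℝ) ^ p * ff α m
      = 2 * ∑ k ∈ Finset.range (m + 1), u k := by
    rw [hu]
    push_cast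
    push_cast at habel
    linarith
  rw [hnum, hsum_v (m+1)]
  have h2 : (2:ℝ) * p / (p - α) * ((m+1:ℕ):ℝ) ^ (p - α)
      = 2 * (p / (p - α) * ((m+1:ℕ):ℝ) ^ (p - α)) := by ring
  rw [h2, mul_div_mul_left _ _ (two_ne_zero)]
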